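/- arXiv:2006.12101 — 5 statements merged into one kernel-verified Lean document; each statement's English description precedes it below -/
import Mathlib

section
/- Additivity of Rényi divergence under products (composition theorem of Rényi differential privacy, Theorem 1 of the paper, stated at the level of output distributions): Let μ₁, ν₁ be probability measures on a measurable space Z₁ and μ₂, ν₂ be probability measures on a measurable space Z₂, and let α > 1. If D_α(μ₁ ‖ ν₁) ≤ ε₁ and D_α(μ₂ ‖ ν₂) ≤ ε₂, then the product measures satisfy D_α(μ₁ ⊗ μ₂ ‖ ν₁ ⊗ ν₂) ≤ ε₁ + ε₂. -/
open MeasureTheory Classical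

/-- The Rényi divergence of order `α` between two measures: `(α-1)⁻¹ · log ∫ (dμ/dν)^α dν`
when `μ ≪ ν`, and `⊤` otherwise. -/
noncomputable def renyiDiv {Z : Type*} [MeasurableSpace Z] (α : ℝ) (μ ν : Measure Z) : EReal :=
  if μ ≪ ν then (((α - 1)⁻¹ : ℝ) : EReal) * ENNReal.log (∫⁻ z, (μ.rnDeriv ν z) ^ α ∂ν)
  else ⊤

/-- A product of `withDensity` measures is a `withDensity` of the product measure. -/
lemma prod_eq_withDensity {Z₁ Z₂ : Type*} [MeasurableSpace Z₁] [MeasurableSpace Z₂]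
    (μ₁ ν₁ : Measure Z₁) (μ₂ ν₂ : Measure Z₂)
    [IsProbabilityMeasure μ₁] [IsProbabilityMeasure ν₁]
    [IsProbabilityMeasure μ₂] [IsProbabilityMeasure ν₂]
    {f : Z₁ → ENNReal} {g : Z₂ → ENNReal} (hf : Measurable f) (hg : Measurable g)
    (h1 : μ₁ = ν₁.withDensity f) (h2 : μ₂ = ν₂.withDensity g) :
    μ₁.prod μ₂ = (ν₁.prod ν₂).withDensity (fun z => f z.1 * g z.2) := by
  refine Measure.prod_eq fun s t hs ht => ?_
  rw [withDensity_apply _ (hs.prod ht), ← Measure.prod_restrict,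
    lintegral_prod_mul hf.aemeasurable hg.aemeasurable,
    h1, h2, withDensity_apply _ hs, withDensity_apply _ ht]

lemma renyi_integral_pos {Z : Type*} [MeasurableSpace Z] {μ ν : Measure Z}
    [IsProbabilityMeasure μ] [IsProbabilityMeasure ν] {α : ℝ} (hα : 1 < α)
    (hac : μ ≪ ν) : ∫⁻ z, (μ.rnDeriv ν z) ^ α ∂ν ≠ 0 := by
  intro h0
  rw [lintegral_eq_zero_iff ((μ.measurable_rnDeriv ν).pow_const α)] at h0
  have hzero : μ.rnDeriv ν =ᵐ[ν] 0 := by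
    filter_upwards [h0] with z hz
    simp only [Pi.zero_apply] at hz ⊢
    rcases ENNReal.rpow_eq_zero_iff.mp hz with ⟨h, _⟩ | ⟨_, h⟩
    · exact h
    · linarith
  have : ∫⁻ z, μ.rnDeriv ν z ∂ν = 0 := by
    rw [lintegral_congr_ae hzero]; simp
  rw [Measure.lintegral_rnDeriv hac] at this
  simp at this

lemma renyi_bound_real {Z : Type*} [MeasurableSpace Z] {μ ν : Measure Z}
    [IsProbabilityMeasure μ] [IsProbabilityMeasure ν] {α ε : ℝ} (hα : 1 < α)
    (h : renyiDiv α μ ν ≤ (ε : EReal)) :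
    μ ≪ ν ∧ (∫⁻ z, (μ.rnDeriv ν z) ^ α ∂ν) ≠ ⊤ ∧
      (α - 1)⁻¹ * Real.log (∫⁻ z, (μ.rnDeriv ν z) ^ α ∂ν).toReal ≤ ε := by
  have hc : (0:ℝ) < (α - 1)⁻¹ := inv_pos.mpr (by linarith)
  have hac : μ ≪ ν := by
    by_contra hn
    rw [renyiDiv, if_neg hn] at h
    exact absurd (top_le_iff.mp h) (EReal.coe_ne_top ε)
  rw [renyiDiv, if_pos hac] at h
  set A := ∫⁻ z, (μ.rnDeriv ν z) ^ α ∂ν with hA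
  have hAtop : A ≠ ⊤ := by
    intro htop
    rw [htop, ENNReal.log_top, EReal.coe_mul_top_of_pos hc] at h
    exact absurd (top_le_iff.mp h) (EReal.coe_ne_top ε)
  have hA0 : A ≠ 0 := renyi_integral_pos hα hac
  refine ⟨hac, hAtop, ?_⟩
  rw [ENNReal.log_pos_real hA0 hAtop, ← EReal.coe_mul, EReal.coe_le_coe_iff] at h
  exact h

theorem renyiDiv_prod_le {Z₁ Z₂ : Type*} [MeasurableSpace Z₁] [MeasurableSpace Z₂]
    (μ₁ ν₁ : Measure Z₁) (μ₂ ν₂ : Measure Z₂)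
    [IsProbabilityMeasure μ₁] [IsProbabilityMeasure ν₁]
    [IsProbabilityMeasure μ₂] [IsProbabilityMeasure ν₂]
    {α ε₁ ε₂ : ℝ} (hα : 1 < α)
    (h₁ : renyiDiv α μ₁ ν₁ ≤ (ε₁ : EReal))
    (h₂ : renyiDiv α μ₂ ν₂ ≤ (ε₂ : EReal)) :
    renyiDiv α (μ₁.prod μ₂) (ν₁.prod ν₂) ≤ ((ε₁ + ε₂ : ℝ) : EReal) := by
  obtain ⟨hac₁, hAtop, hbound₁⟩ := renyi_bound_real hα h₁
  obtain ⟨hac₂, hBtop, hbound₂⟩ := renyi_bound_real hα h₂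
  set f := μ₁.rnDeriv ν₁ with hf
  set g := μ₂.rnDeriv ν₂ with hg
  have hfm : Measurable f := μ₁.measurable_rnDeriv ν₁
  have hgm : Measurable g := μ₂.measurable_rnDeriv ν₂
  set A := ∫⁻ z, f z ^ α ∂ν₁ with hA
  set B := ∫⁻ z, g z ^ α ∂ν₂ with hB
  have hA0 : A ≠ 0 := renyi_integral_pos hα hac₁
  have hB0 : B ≠ 0 := renyi_integral_pos hα hac₂
  -- product measure is withDensity of the product of rnDerivs
  have hprod : μ₁.prod μ₂ = (ν₁.prod ν₂).withDensity (fun z => f z.1 * g z.2) :=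
    prod_eq_withDensity μ₁ ν₁ μ₂ ν₂ hfm hgm
      (μ₁.withDensity_rnDeriv_eq ν₁ hac₁).symm (μ₂.withDensity_rnDeriv_eq ν₂ hac₂).symm
  have hacp : μ₁.prod μ₂ ≪ ν₁.prod ν₂ := hac₁.prod hac₂
  -- rnDeriv of product
  have hrn : (μ₁.prod μ₂).rnDeriv (ν₁.prod ν₂) =ᵐ[ν₁.prod ν₂] fun z => f z.1 * g z.2 := by
    rw [hprod]
    exact Measure.rnDeriv_withDensity (ν₁.prod ν₂) ((hfm.comp measurable_fst).mul
      (hgm.comp measurable_snd))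
  -- the integral factorizes
  have hC : ∫⁻ z, ((μ₁.prod μ₂).rnDeriv (ν₁.prod ν₂) z) ^ α ∂(ν₁.prod ν₂) = A * B := by
    have h1 : ∫⁻ z, ((μ₁.prod μ₂).rnDeriv (ν₁.prod ν₂) z) ^ α ∂(ν₁.prod ν₂)
        = ∫⁻ z, (f z.1 * g z.2) ^ α ∂(ν₁.prod ν₂) := by
      refine lintegral_congr_ae ?_
      filter_upwards [hrn] with z hz
      rw [hz]
    rw [h1]
    have h2 : ∀ z : Z₁ × Z₂, (f z.1 * g z.2) ^ α = f z.1 ^ α * g z.2 ^ α := fun z =>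
      ENNReal.mul_rpow_of_nonneg _ _ (by linarith)
    simp_rw [h2]
    exact lintegral_prod_mul (hfm.pow_const α).aemeasurable (hgm.pow_const α).aemeasurable
  rw [renyiDiv, if_pos hacp, hC]
  have hABtop : A * B ≠ ⊤ := ENNReal.mul_ne_top hAtop hBtop
  have hAB0 : A * B ≠ 0 := mul_ne_zero hA0 hB0
  rw [ENNReal.log_pos_real hAB0 hABtop, ← EReal.coe_mul, EReal.coe_le_coe_iff]
  rw [ENNReal.toReal_mul, Real.log_mul (ENNReal.toReal_ne_zero.mpr ⟨hA0, hAtop⟩)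
    (ENNReal.toReal_ne_zero.mpr ⟨hB0, hBtop⟩), mul_add]
  exact add_le_add hbound₁ hbound₂
end

section
/- Adaptive composition bound for Rényi divergence (chain rule used in composing differentially private mechanisms): Let μ, ν be probability measures on a measurable space Z₁, let κ, η be Markov (probability) kernels from Z₁ to a measurable space Z₂, and let α > 1. If D_α(μ ‖ ν) ≤ ε₁ and D_α(κ(z) ‖ η(z)) ≤ ε₂ for every z ∈ Z₁, then the composed measures on Z₁ × Z₂ satisfy D_α(μ ⊗ κ ‖ ν ⊗ η) ≤ ε₁ + ε₂, where μ ⊗ κ denotes the measure obtained by sampling z ∼ μ and then w ∼ κ(z). -/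
open MeasureTheory Classical

open scoped ENNReal NNReal

/-- Core Hölder-type inequality, assuming `a` vanishes where `b` does. -/
lemma holder_core {W : Type*} [MeasurableSpace W] (ξ : Measure W) {α : ℝ} (hα : 1 < α)
    {a b : W → ℝ≥0∞} (ha : Measurable a) (hb : Measurable b)
    (hab : ∀ w, b w = 0 → a w = 0) (hbt : ∫⁻ w, b w ∂ξ ≠ ⊤) :
    (∫⁻ w, a w ∂ξ) ^ α * (∫⁻ w, b w ∂ξ) ^ (1 - α) ≤ ∫⁻ w, a w ^ α * b w ^ (1 - α) ∂ξ := by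
  have hα0 : (0:ℝ) < α := by linarith
  by_cases hb0 : ∫⁻ w, b w ∂ξ = 0
  · -- then b = 0 a.e., hence a = 0 a.e.
    have hbz : b =ᵐ[ξ] 0 := (lintegral_eq_zero_iff hb).mp hb0
    have haz : a =ᵐ[ξ] 0 := hbz.mono fun w hw => hab w hw
    have : ∫⁻ w, a w ∂ξ = 0 := (lintegral_eq_zero_iff ha).mpr haz
    rw [this, ENNReal.zero_rpow_of_pos hα0, zero_mul]
    exact zero_le
  -- main case
  have hq : α.HolderConjugate (α / (α - 1)) := Real.HolderConjugate.conjExponent hα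
  set q : ℝ := α / (α - 1) with hqdef
  set f : W → ℝ≥0∞ := fun w => a w * b w ^ ((1 - α) / α) with hf
  set g : W → ℝ≥0∞ := fun w => b w ^ ((α - 1) / α) with hg
  have hblt : ∀ᵐ w ∂ξ, b w < ⊤ := ae_lt_top hb hbt
  have hfg : ∀ᵐ w ∂ξ, a w = f w * g w := by
    filter_upwards [hblt] with w hw
    rcases eq_or_ne (b w) 0 with h0 | h0
    · simp [hf, hg, hab w h0, h0]
    · simp only [hf, hg, mul_assoc]
      rw [← ENNReal.rpow_add _ _ h0 hw.ne, ← add_div,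
        show (1 - α) + (α - 1) = 0 by ring, zero_div, ENNReal.rpow_zero, mul_one]
  have hfpow : ∀ w, f w ^ α = a w ^ α * b w ^ (1 - α) := by
    intro w
    rw [hf, ENNReal.mul_rpow_of_nonneg _ _ hα0.le, ← ENNReal.rpow_mul,
      div_mul_cancel₀ _ hα0.ne']
  have hgpow : ∀ w, g w ^ q = b w := by
    intro w
    rw [hg, ← ENNReal.rpow_mul]
    have hα1 : α - 1 ≠ 0 := by linarith
    rw [show (α - 1) / α * q = 1 by rw [hqdef]; field_simp, ENNReal.rpow_one]
  have hmf : AEMeasurable f ξ := (ha.mul (hb.pow_const _)).aemeasurable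
  have hmg : AEMeasurable g ξ := (hb.pow_const _).aemeasurable
  have holder := ENNReal.lintegral_mul_le_Lp_mul_Lq ξ hq hmf hmg
  have hA : ∫⁻ w, a w ∂ξ ≤ (∫⁻ w, a w ^ α * b w ^ (1 - α) ∂ξ) ^ (1 / α)
      * (∫⁻ w, b w ∂ξ) ^ (1 / q) := by
    calc ∫⁻ w, a w ∂ξ = ∫⁻ w, (f * g) w ∂ξ := lintegral_congr_ae hfg
    _ ≤ (∫⁻ w, f w ^ α ∂ξ) ^ (1 / α) * (∫⁻ w, g w ^ q ∂ξ) ^ (1 / q) := holder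
    _ = (∫⁻ w, a w ^ α * b w ^ (1 - α) ∂ξ) ^ (1 / α) * (∫⁻ w, b w ∂ξ) ^ (1 / q) := by
        simp_rw [hfpow, hgpow]
  set A := ∫⁻ w, a w ∂ξ
  set B := ∫⁻ w, b w ∂ξ
  set R := ∫⁻ w, a w ^ α * b w ^ (1 - α) ∂ξ
  have h1 : A ^ α ≤ R * B ^ (α - 1) := by
    calc A ^ α ≤ (R ^ (1 / α) * B ^ (1 / q)) ^ α := ENNReal.rpow_le_rpow hA hα0.le
    _ = R ^ ((1 / α) * α) * B ^ ((1 / q) * α) := by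
        rw [ENNReal.mul_rpow_of_nonneg _ _ hα0.le, ← ENNReal.rpow_mul, ← ENNReal.rpow_mul]
    _ = R * B ^ (α - 1) := by
        rw [one_div_mul_cancel hα0.ne', ENNReal.rpow_one]
        congr 1
        rw [hqdef, one_div_div, div_mul_cancel₀ _ hα0.ne']
  calc A ^ α * B ^ (1 - α) ≤ (R * B ^ (α - 1)) * B ^ (1 - α) :=
        mul_le_mul_left h1 _
  _ = R * (B ^ (α - 1) * B ^ (1 - α)) := by rw [mul_assoc]
  _ = R := by
      rw [← ENNReal.rpow_add _ _ hb0 hbt]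
      norm_num

/-- General Hölder-type inequality for lintegrals. -/
lemma holder_aux {W : Type*} [MeasurableSpace W] (ξ : Measure W) {α : ℝ} (hα : 1 < α)
    {a b : W → ℝ≥0∞} (ha : Measurable a) (hb : Measurable b) :
    (∫⁻ w, a w ∂ξ) ^ α * (∫⁻ w, b w ∂ξ) ^ (1 - α) ≤ ∫⁻ w, a w ^ α * b w ^ (1 - α) ∂ξ := by
  have hα0 : (0:ℝ) < α := by linarith
  have h1α : 1 - α < 0 := by linarith
  by_cases hbt : ∫⁻ w, b w ∂ξ = ⊤
  · rw [hbt, ENNReal.top_rpow_of_neg h1α, mul_zero]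
    exact zero_le
  have hT : MeasurableSet {w | b w = 0} := hb (measurableSet_singleton 0)
  by_cases hTa : ∫⁻ w in {w | b w = 0}, a w ∂ξ = 0
  · -- replace a by a' vanishing where b vanishes
    set a' : W → ℝ≥0∞ := fun w => if b w = 0 then 0 else a w with ha'def
    have ha' : Measurable a' := Measurable.ite hT measurable_const ha
    have ha'le : ∀ w, a' w ≤ a w := fun w => by
      rw [ha'def]; dsimp only; split
      · exact zero_le
      · exact le_rfl
    have h2 : ∫⁻ w in {w | b w = 0}, a' w ∂ξ = 0 :=
      le_antisymm ((lintegral_mono fun w => ha'le w).trans hTa.le) zero_le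
    have haa' : ∫⁻ w, a w ∂ξ = ∫⁻ w, a' w ∂ξ := by
      have h3 : ∫⁻ w in {w | b w = 0}ᶜ, a' w ∂ξ = ∫⁻ w in {w | b w = 0}ᶜ, a w ∂ξ :=
        setLIntegral_congr_fun hT.compl (fun w (hw : ¬ b w = 0) => by
          simp [ha'def, hw])
      rw [← lintegral_add_compl a hT, ← lintegral_add_compl a' hT, hTa, h2, h3]
    rw [haa']
    refine (holder_core ξ hα ha' hb (fun w hw => by simp [ha'def, hw]) hbt).trans
      (lintegral_mono fun w => ?_)
    exact mul_le_mul_left (ENNReal.rpow_le_rpow (ha'le w) hα0.le) _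
  · -- the right-hand side is infinite
    set S : Set W := {w | a w ≠ 0} ∩ {w | b w = 0} with hSdef
    have hSm : MeasurableSet S := (ha (measurableSet_singleton 0)).compl.inter hT
    have hSpos : ξ S ≠ 0 := by
      intro h0
      refine hTa ?_
      rw [lintegral_eq_zero_iff ha, Filter.EventuallyEq, ae_iff]
      simp only [Pi.zero_apply]
      have hr : (ξ.restrict {w | b w = 0}) {w | ¬ a w = 0} = ξ S :=
        (Measure.restrict_apply
          ((ha (measurableSet_singleton 0)).compl : MeasurableSet {w | ¬ a w = 0})).trans rfl
      rw [hr]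
      exact h0
    have hpt : ∀ w ∈ S, a w ^ α * b w ^ (1 - α) = (⊤:ℝ≥0∞) := by
      intro w hw
      obtain ⟨ha0, hb0⟩ := hw
      have h1 : a w ^ α ≠ 0 := fun h => by
        rcases ENNReal.rpow_eq_zero_iff.mp h with ⟨h,_⟩|⟨_,h⟩
        · exact ha0 h
        · linarith
      rw [show b w = 0 from hb0, ENNReal.zero_rpow_of_neg h1α, ENNReal.mul_top h1]
    have htop : ∫⁻ w in S, a w ^ α * b w ^ (1 - α) ∂ξ = ⊤ := by
      rw [setLIntegral_congr_fun hSm hpt, setLIntegral_const,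
        ENNReal.top_mul hSpos]
    have : ∫⁻ w, a w ^ α * b w ^ (1 - α) ∂ξ = ⊤ :=
      top_le_iff.mp (htop ▸ setLIntegral_le_lintegral S _)
    rw [this]
    exact le_top

/-- Finite-partition (Gelfand-type) bound for the Rényi integral. -/
lemma partition_le {Z : Type*} [MeasurableSpace Z] {p q : Measure Z}
    [IsFiniteMeasure p] [IsFiniteMeasure q] (hpq : p ≪ q) {α : ℝ} (hα : 1 < α)
    {ι : Type*} (t : Finset ι) (B : ι → Set Z) (hm : ∀ i ∈ t, MeasurableSet (B i))
    (hd : Set.PairwiseDisjoint ↑t B) :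
    ∑ i ∈ t, p (B i) ^ α * q (B i) ^ (1 - α) ≤ ∫⁻ x, (p.rnDeriv q x) ^ α ∂q := by
  have key : ∀ i ∈ t, p (B i) ^ α * q (B i) ^ (1 - α)
      ≤ ∫⁻ x in B i, (p.rnDeriv q x) ^ α ∂q := by
    intro i hi
    have h1 : ∫⁻ x in B i, p.rnDeriv q x ∂q = p (B i) :=
      Measure.setLIntegral_rnDeriv hpq (B i)
    have h2 : ∫⁻ x in B i, (1:ℝ≥0∞) ∂q = q (B i) := setLIntegral_one _
    have := holder_aux (q.restrict (B i)) hα (Measure.measurable_rnDeriv p q)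
      (measurable_const : Measurable fun _ : Z => (1:ℝ≥0∞))
    rw [h1, h2] at this
    refine this.trans (le_of_eq (lintegral_congr fun x => ?_))
    rw [ENNReal.one_rpow, mul_one]
  calc ∑ i ∈ t, p (B i) ^ α * q (B i) ^ (1 - α)
      ≤ ∑ i ∈ t, ∫⁻ x in B i, (p.rnDeriv q x) ^ α ∂q := Finset.sum_le_sum key
  _ = ∫⁻ x in ⋃ i ∈ t, B i, (p.rnDeriv q x) ^ α ∂q :=
      (lintegral_biUnion_finset hd hm _).symm
  _ ≤ ∫⁻ x, (p.rnDeriv q x) ^ α ∂q := setLIntegral_le_lintegral _ _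

lemma rpow_mass_le {α : ℝ} (hα : 1 < α) {c R T : ℝ≥0∞} (h : c * R ≤ T) (hR : R ≠ ⊤) :
    c ^ α * R ≤ T ^ α * R ^ (1 - α) := by
  have hα0 : (0:ℝ) < α := by linarith
  rcases eq_or_ne R 0 with h0 | h0
  · simp [h0]
  calc c ^ α * R = (c * R) ^ α * R ^ (1 - α) := by
        rw [ENNReal.mul_rpow_of_nonneg _ _ hα0.le, mul_assoc,
          ← ENNReal.rpow_add _ _ h0 hR]
        norm_num
  _ ≤ T ^ α * R ^ (1 - α) := mul_le_mul_left (ENNReal.rpow_le_rpow h hα0.le) _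

lemma renyi_le_iff {Z : Type*} [MeasurableSpace Z] {μ ν : Measure Z} (hac : μ ≪ ν)
    {α ε : ℝ} (hα : 1 < α) :
    renyiDiv α μ ν ≤ (ε : EReal)
      ↔ ∫⁻ z, μ.rnDeriv ν z ^ α ∂ν ≤ ENNReal.ofReal (Real.exp ((α - 1) * ε)) := by
  rw [renyiDiv, if_pos hac]
  set I := ∫⁻ z, μ.rnDeriv ν z ^ α ∂ν with hI
  have hc : (0:ℝ) < (α - 1)⁻¹ := by
    rw [inv_pos]; linarith
  have step1 : (((α - 1)⁻¹ : ℝ) : EReal) * ENNReal.log I ≤ (ε : EReal)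
      ↔ ENNReal.log I ≤ (((α - 1) * ε : ℝ) : EReal) := by
    induction' ENNReal.log I using EReal.rec with x
    · simp only [EReal.coe_mul_bot_of_pos hc, bot_le, iff_true]
    · rw [← EReal.coe_mul, EReal.coe_le_coe_iff, EReal.coe_le_coe_iff]
      rw [inv_mul_le_iff₀ (by linarith : (0:ℝ) < α - 1)]
    · simp only [EReal.coe_mul_top_of_pos hc]
      exact iff_of_false (EReal.coe_lt_top ε).not_ge (EReal.coe_lt_top _).not_ge
  rw [step1]
  have hrhs : ENNReal.ofReal (Real.exp ((α - 1) * ε)) = ENNReal.ofReal (Real.exp ((α - 1) * ε)) := rfl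
  constructor
  · intro h
    have := ENNReal.log_le_log_iff.mpr (le_refl I)
    rw [← ENNReal.log_le_log_iff]
    rw [ENNReal.log_ofReal_of_pos (Real.exp_pos _), Real.log_exp]
    exact h
  · intro h
    have := ENNReal.log_le_log_iff.mpr h
    rwa [ENNReal.log_ofReal_of_pos (Real.exp_pos _), Real.log_exp] at this

open ProbabilityTheory

theorem renyiDiv_compProd_le {Z₁ Z₂ : Type*} [MeasurableSpace Z₁] [MeasurableSpace Z₂]
    (μ ν : Measure Z₁) (κ η : Kernel Z₁ Z₂)
    [IsProbabilityMeasure μ] [IsProbabilityMeasure ν]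
    [IsMarkovKernel κ] [IsMarkovKernel η]
    {α ε₁ ε₂ : ℝ} (hα : 1 < α)
    (h₁ : renyiDiv α μ ν ≤ (ε₁ : EReal))
    (h₂ : ∀ z : Z₁, renyiDiv α (κ z) (η z) ≤ (ε₂ : EReal)) :
    renyiDiv α (μ ⊗ₘ κ) (ν ⊗ₘ η) ≤ ((ε₁ + ε₂ : ℝ) : EReal) := by
  have hα0 : (0:ℝ) < α := by linarith
  have hμν : μ ≪ ν := by
    by_contra h
    rw [renyiDiv, if_neg h] at h₁
    exact (EReal.coe_lt_top ε₁).not_ge h₁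
  have hκη : ∀ z, κ z ≪ η z := by
    intro z
    by_contra h
    have h' := h₂ z
    rw [renyiDiv, if_neg h] at h'
    exact (EReal.coe_lt_top ε₂).not_ge h'
  have hac : μ ⊗ₘ κ ≪ ν ⊗ₘ η :=
    Measure.AbsolutelyContinuous.compProd hμν (ae_of_all _ hκη)
  rw [renyi_le_iff hac hα]
  set E₁ := ENNReal.ofReal (Real.exp ((α - 1) * ε₁)) with hE₁
  set E₂ := ENNReal.ofReal (Real.exp ((α - 1) * ε₂)) with hE₂
  have h₁' : ∫⁻ z, μ.rnDeriv ν z ^ α ∂ν ≤ E₁ := (renyi_le_iff hμν hα).mp h₁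
  have h₂' : ∀ z, ∫⁻ x, ((κ z).rnDeriv (η z) x) ^ α ∂(η z) ≤ E₂ :=
    fun z => (renyi_le_iff (hκη z) hα).mp (h₂ z)
  have hEmul : E₁ * E₂ = ENNReal.ofReal (Real.exp ((α - 1) * (ε₁ + ε₂))) := by
    rw [hE₁, hE₂, ← ENNReal.ofReal_mul (Real.exp_pos _).le, ← Real.exp_add]
    ring_nf
  refine le_trans ?_ hEmul.le
  set ρ := ν ⊗ₘ η with hρdef
  set f := (μ ⊗ₘ κ).rnDeriv ρ with hfdef
  have hf : Measurable f := Measure.measurable_rnDeriv _ _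
  set g := μ.rnDeriv ν with hgdef
  have hg : Measurable g := Measure.measurable_rnDeriv _ _
  have key : ∀ E : Set (Z₁ × Z₂), MeasurableSet E →
      ((μ ⊗ₘ κ) E) ^ α * (ρ E) ^ (1 - α)
        ≤ ∫⁻ z, g z ^ α * ((κ z (Prod.mk z ⁻¹' E)) ^ α
            * (η z (Prod.mk z ⁻¹' E)) ^ (1 - α)) ∂ν := by
    intro E hE
    have hτ : (μ ⊗ₘ κ) E = ∫⁻ z, g z * κ z (Prod.mk z ⁻¹' E) ∂ν := by
      rw [Measure.compProd_apply hE, ← Measure.withDensity_rnDeriv_eq μ ν hμν,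
        lintegral_withDensity_eq_lintegral_mul _ hg
          (Kernel.measurable_kernel_prodMk_left hE)]
      rfl
    have hρE : ρ E = ∫⁻ z, η z (Prod.mk z ⁻¹' E) ∂ν := Measure.compProd_apply hE
    rw [hτ, hρE]
    refine (holder_aux ν hα (hg.mul (Kernel.measurable_kernel_prodMk_left hE))
      (Kernel.measurable_kernel_prodMk_left hE)).trans
      (le_of_eq (lintegral_congr fun z => ?_))
    rw [Pi.mul_apply, ENNReal.mul_rpow_of_nonneg _ _ hα0.le, mul_assoc]
  have keysimple : ∀ s : SimpleFunc (Z₁ × Z₂) ℝ≥0∞, (∀ x, s x ≤ f x) →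
      ∫⁻ x, (s x) ^ α ∂ρ ≤ E₁ * E₂ := by
    intro s hs
    have h1 : ∫⁻ x, (s x) ^ α ∂ρ = ∑ c ∈ s.range, c ^ α * ρ (s ⁻¹' {c}) := by
      rw [show (fun x => (s x) ^ α) = fun x => (s.map (fun y : ℝ≥0∞ => y ^ α)) x from
        funext fun x => (SimpleFunc.map_apply (fun y : ℝ≥0∞ => y ^ α) s x).symm]
      rw [SimpleFunc.lintegral_eq_lintegral, SimpleFunc.map_lintegral]
    rw [h1]
    calc ∑ c ∈ s.range, c ^ α * ρ (s ⁻¹' {c})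
        ≤ ∑ c ∈ s.range, ((μ ⊗ₘ κ) (s ⁻¹' {c})) ^ α * (ρ (s ⁻¹' {c})) ^ (1 - α) := by
          refine Finset.sum_le_sum fun c _ => rpow_mass_le hα ?_ (measure_ne_top _ _)
          have hEc : MeasurableSet (s ⁻¹' {c}) := s.measurableSet_fiber c
          have h2 : c * ρ (s ⁻¹' {c}) = ∫⁻ x in s ⁻¹' {c}, c ∂ρ :=
            (setLIntegral_const _ _).symm
          rw [h2]
          refine le_trans (setLIntegral_mono hf fun x hx => ?_)
            (Measure.setLIntegral_rnDeriv_le _)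
          rw [show c = s x from (hx : s x = c).symm]
          exact hs x
      _ ≤ ∑ c ∈ s.range, ∫⁻ z, g z ^ α * ((κ z (Prod.mk z ⁻¹' (s ⁻¹' {c}))) ^ α
            * (η z (Prod.mk z ⁻¹' (s ⁻¹' {c}))) ^ (1 - α)) ∂ν :=
          Finset.sum_le_sum fun c _ => key _ (s.measurableSet_fiber c)
      _ = ∫⁻ z, ∑ c ∈ s.range, g z ^ α * ((κ z (Prod.mk z ⁻¹' (s ⁻¹' {c}))) ^ α
            * (η z (Prod.mk z ⁻¹' (s ⁻¹' {c}))) ^ (1 - α)) ∂ν :=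
          (lintegral_finset_sum _ fun c _ => ((hg.pow_const α).mul
            (((Kernel.measurable_kernel_prodMk_left (s.measurableSet_fiber c)).pow_const α).mul
            ((Kernel.measurable_kernel_prodMk_left (s.measurableSet_fiber c)).pow_const
              (1 - α))))).symm
      _ = ∫⁻ z, g z ^ α * ∑ c ∈ s.range, ((κ z (Prod.mk z ⁻¹' (s ⁻¹' {c}))) ^ α
            * (η z (Prod.mk z ⁻¹' (s ⁻¹' {c}))) ^ (1 - α)) ∂ν := by
          simp_rw [← Finset.mul_sum]
      _ ≤ ∫⁻ z, g z ^ α * E₂ ∂ν := by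
          refine lintegral_mono fun z => mul_le_mul_right ?_ _
          refine le_trans ?_ (h₂' z)
          refine partition_le (hκη z) hα s.range
            (fun c => Prod.mk z ⁻¹' (s ⁻¹' {c}))
            (fun c _ => measurable_prodMk_left (s.measurableSet_fiber c))
            (fun c _ d _ hcd =>
              (((Set.disjoint_singleton.mpr hcd).preimage s).preimage (Prod.mk z)))
      _ = (∫⁻ z, g z ^ α ∂ν) * E₂ := lintegral_mul_const _ (hg.pow_const α)
      _ ≤ E₁ * E₂ := mul_le_mul_left h₁' _
  calc ∫⁻ x, f x ^ α ∂ρ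
      = ⨆ n, ∫⁻ x, (SimpleFunc.eapprox f n x) ^ α ∂ρ := by
        rw [← lintegral_iSup (fun n => (SimpleFunc.eapprox f n).measurable.pow_const α)
          (fun i j hij x => ENNReal.rpow_le_rpow (SimpleFunc.monotone_eapprox f hij x) hα0.le)]
        refine lintegral_congr fun x => ?_
        rw [← SimpleFunc.iSup_eapprox_apply hf x]
        exact Monotone.map_iSup_of_continuousAt
          (ENNReal.continuous_rpow_const.continuousAt)
          (fun u v huv => ENNReal.rpow_le_rpow huv hα0.le)
          (by simp [ENNReal.zero_rpow_of_pos hα0])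
  _ ≤ E₁ * E₂ := iSup_le fun n => keysimple _ fun x =>
      le_trans (le_iSup (fun m => SimpleFunc.eapprox f m x) n)
        (SimpleFunc.iSup_eapprox_apply hf x).le
end

section
/- Conversion from Rényi differential privacy to approximate differential privacy (Theorem 2 of the paper, stated at the level of output distributions): Let μ, ν be probability measures on a measurable space Z, let α > 1, ε ≥ 0, and 0 < δ < 1. If D_α(μ ‖ ν) ≤ ε, then for every measurable set S ⊆ Z, μ(S) ≤ exp(ε + log(1/δ)/(α−1)) · ν(S) + δ. -/
open MeasureTheory Classical

theorem rdp_to_dp {Z : Type*} [MeasurableSpace Z] (μ ν : Measure Z)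
    [IsProbabilityMeasure μ] [IsProbabilityMeasure ν]
    {α ε δ : ℝ} (hα : 1 < α) (hε : 0 ≤ ε) (hδ₀ : 0 < δ) (hδ₁ : δ < 1)
    (h : renyiDiv α μ ν ≤ (ε : EReal)) :
    ∀ S : Set Z, MeasurableSet S →
      μ S ≤ ENNReal.ofReal (Real.exp (ε + Real.log (1 / δ) / (α - 1))) * ν S
        + ENNReal.ofReal δ := by
  intro S hS
  have hα1 : (0:ℝ) < α - 1 := by linarith
  by_cases hac : μ ≪ ν
  swap
  · exfalso
    rw [renyiDiv, if_neg hac] at h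
    exact (lt_irrefl _ ((EReal.coe_lt_top ε).trans_le h))
  set f := μ.rnDeriv ν with hf
  have hfm : Measurable f := μ.measurable_rnDeriv ν
  set c : ℝ := Real.exp (ε + Real.log (1 / δ) / (α - 1)) with hc
  have hcpos : 0 < c := Real.exp_pos _
  rw [renyiDiv, if_pos hac] at h
  set I := ∫⁻ z, f z ^ α ∂ν with hI
  -- integral bound from the Rényi divergence assumption
  have hL : ENNReal.log I ≤ (((α - 1) * ε : ℝ) : EReal) := by
    rw [show (((α - 1)⁻¹ : ℝ) : EReal) * ENNReal.log I
          = ENNReal.log I / (((α - 1 : ℝ)) : EReal) by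
        rw [EReal.coe_inv, EReal.div_eq_inv_mul]] at h
    rw [EReal.div_le_iff_le_mul (by exact_mod_cast hα1) (EReal.coe_ne_top _)] at h
    rwa [← EReal.coe_mul] at h
  have hIb : I ≤ ENNReal.ofReal (Real.exp ((α - 1) * ε)) := by
    calc I = EReal.exp (ENNReal.log I) := (ENNReal.exp_log I).symm
    _ ≤ EReal.exp (((α - 1) * ε : ℝ) : EReal) := EReal.exp_monotone hL
    _ = ENNReal.ofReal (Real.exp ((α - 1) * ε)) := by rw [EReal.exp_coe]
  -- the bad set
  set T : Set Z := {z | ENNReal.ofReal c < f z} with hT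
  have hTm : MeasurableSet T := hfm measurableSet_Ioi
  set C : ENNReal := (ENNReal.ofReal c) ^ (α - 1) with hC
  have hC0 : C ≠ 0 := by
    simp only [hC, ne_eq, ENNReal.rpow_eq_zero_iff, not_or]
    constructor
    · rintro ⟨h0, -⟩
      exact absurd h0 (by simp [ENNReal.ofReal_pos.mpr hcpos, (ENNReal.ofReal_pos.mpr hcpos).ne'])
    · rintro ⟨h0, -⟩
      exact ENNReal.ofReal_ne_top h0
  have hCt : C ≠ ⊤ := by
    simp only [hC, ne_eq, ENNReal.rpow_eq_top_iff, not_or]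
    constructor
    · rintro ⟨h0, -⟩
      exact absurd h0 (ENNReal.ofReal_pos.mpr hcpos).ne'
    · rintro ⟨h0, -⟩
      exact ENNReal.ofReal_ne_top h0
  -- pointwise Markov inequality on T
  have hkey : ∀ z ∈ T, f z * C ≤ f z ^ α := by
    intro z hz
    rcases eq_or_ne (f z) ⊤ with hft | hft
    · rw [hft, ENNReal.top_rpow_of_pos (by linarith), ENNReal.top_mul hC0]
    · have hfz0 : f z ≠ 0 := by
        intro h0
        have hz' : ENNReal.ofReal c < f z := hz
        rw [h0] at hz'
        simp at hz'
      calc f z * C ≤ f z * f z ^ (α - 1) := by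
            gcongr
            exact ENNReal.rpow_le_rpow (le_of_lt hz) (by linarith)
      _ = f z ^ α := by
            nth_rewrite 1 [← ENNReal.rpow_one (f z)]
            rw [← ENNReal.rpow_add _ _ hfz0 hft]
            norm_num
  -- measure of the bad set
  have hμT : μ T ≤ ENNReal.ofReal δ := by
    have h1 : μ T * C ≤ ENNReal.ofReal (Real.exp ((α - 1) * ε)) := by
      calc μ T * C = (∫⁻ z in T, f z ∂ν) * C := by
            rw [Measure.setLIntegral_rnDeriv hac T]
      _ = ∫⁻ z in T, f z * C ∂ν := (lintegral_mul_const C hfm).symm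
      _ ≤ ∫⁻ z in T, f z ^ α ∂ν := setLIntegral_mono' hTm hkey
      _ ≤ I := setLIntegral_le_lintegral T _
      _ ≤ _ := hIb
    have h2 : ENNReal.ofReal (Real.exp ((α - 1) * ε)) / C = ENNReal.ofReal δ := by
      have hcr : C = ENNReal.ofReal (Real.exp ((α - 1) * ε + Real.log (1 / δ))) := by
        rw [hC, ENNReal.ofReal_rpow_of_pos hcpos, hc,
          ← Real.exp_mul]
        congr 1
        field_simp
      rw [hcr, ← ENNReal.ofReal_div_of_pos (Real.exp_pos _), ← Real.exp_sub]
      congr 1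
      rw [show (α - 1) * ε - ((α - 1) * ε + Real.log (1 / δ)) = -Real.log (1 / δ) by ring,
        Real.exp_neg, Real.exp_log (by positivity)]
      field_simp
    rw [← h2]
    exact ENNReal.le_div_iff_mul_le (Or.inl hC0) (Or.inl hCt) |>.mpr h1
  -- measure of the good part
  have hgood : μ (S ∩ Tᶜ) ≤ ENNReal.ofReal c * ν S := by
    calc μ (S ∩ Tᶜ) = ∫⁻ z in S ∩ Tᶜ, f z ∂ν := (Measure.setLIntegral_rnDeriv hac _).symm
    _ ≤ ∫⁻ _ in S ∩ Tᶜ, ENNReal.ofReal c ∂ν := by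
          refine setLIntegral_mono' (hS.inter hTm.compl) fun z hz => ?_
          exact not_lt.mp hz.2
    _ = ENNReal.ofReal c * ν (S ∩ Tᶜ) := by
          rw [setLIntegral_const, mul_comm]
    _ ≤ ENNReal.ofReal c * ν S := by
          gcongr
          exact Set.inter_subset_left
  calc μ S = μ ((S ∩ Tᶜ) ∪ (S ∩ T)) := by
        congr 1
        rw [← Set.inter_union_distrib_left, Set.compl_union_self, Set.inter_univ]
  _ ≤ μ (S ∩ Tᶜ) + μ (S ∩ T) := measure_union_le _ _
  _ ≤ ENNReal.ofReal c * ν S + ENNReal.ofReal δ := by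
        gcongr
        exact le_trans (measure_mono Set.inter_subset_right) hμT
end

section
/- Rényi divergence between two real Gaussian distributions of equal variance: for real numbers m₁, m₂, σ > 0 and α > 1, the Rényi divergence of order α between the Gaussian distribution on ℝ with mean m₁ and variance σ² and the Gaussian distribution on ℝ with mean m₂ and variance σ² equals α · (m₁ − m₂)² / (2σ²). -/
open MeasureTheory Classical

open ProbabilityTheory Real
open scoped ENNReal

lemma real_aux {m₁ m₂ σ α : ℝ} (hσ : 0 < σ) (v : NNReal) (hvr : (v : ℝ) = σ ^ 2) (x : ℝ) :
    (gaussianPDFReal m₁ v x / gaussianPDFReal m₂ v x) ^ α * gaussianPDFReal m₂ v x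
      = rexp (α * (α - 1) * (m₁ - m₂) ^ 2 / (2 * σ ^ 2))
        * gaussianPDFReal (α * m₁ + (1 - α) * m₂) v x := by
  have hv : (0:ℝ) < (v : ℝ) := by rw [hvr]; positivity
  simp only [gaussianPDFReal]
  set c : ℝ := (√(2 * π * v))⁻¹ with hc
  have hcpos : 0 < c := by rw [hc]; positivity
  rw [mul_div_mul_left _ _ hcpos.ne', ← Real.exp_sub, ← Real.exp_mul]
  have hmul : ∀ a b : ℝ, rexp a * (c * rexp b) = c * rexp (a + b) := fun a b ↦ by
    rw [Real.exp_add]; ring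
  rw [hmul, hmul]
  congr 1
  rw [Real.exp_eq_exp, hvr]
  have h2 : (2 : ℝ) * σ ^ 2 ≠ 0 := by positivity
  field_simp
  ring

theorem renyiDiv_gaussianReal {m₁ m₂ σ α : ℝ} (hσ : 0 < σ) (hα : 1 < α) :
    renyiDiv α (gaussianReal m₁ ((σ ^ 2).toNNReal) ) (gaussianReal m₂ ((σ ^ 2).toNNReal)) =
      ((α * (m₁ - m₂) ^ 2 / (2 * σ ^ 2) : ℝ) : EReal) := by
  set v : NNReal := (σ ^ 2).toNNReal with hvdef
  have hvr : (v : ℝ) = σ ^ 2 := Real.coe_toNNReal _ (by positivity)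
  have hv : v ≠ 0 := by
    intro h
    rw [h] at hvr
    simp at hvr
    nlinarith
  set μ₁ := gaussianReal m₁ v
  set μ₂ := gaussianReal m₂ v
  have hac2 : volume ≪ μ₂ := gaussianReal_absolutelyContinuous' m₂ hv
  have hac : μ₁ ≪ μ₂ := (gaussianReal_absolutelyContinuous m₁ hv).trans hac2
  rw [renyiDiv, if_pos hac]
  set K : ℝ := α * (α - 1) * (m₁ - m₂) ^ 2 / (2 * σ ^ 2) with hK
  -- compute the rnDeriv a.e.
  have hpdf_pos : ∀ m x, 0 < gaussianPDFReal m v x := fun m x ↦ gaussianPDFReal_pos m v x hv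
  have h_rn : μ₁.rnDeriv μ₂ =ᵐ[volume]
      fun x ↦ gaussianPDF m₁ v x / gaussianPDF m₂ v x := by
    have h1 := Measure.rnDeriv_mul_rnDeriv (κ := volume) hac
    filter_upwards [h1, rnDeriv_gaussianReal m₁ v, rnDeriv_gaussianReal m₂ v] with x hx h1x h2x
    rw [Pi.mul_apply, h2x] at hx
    rw [ENNReal.eq_div_iff]
    · rw [mul_comm, hx]; exact h1x
    · simp only [gaussianPDF]
      exact fun h ↦ absurd (ENNReal.ofReal_eq_zero.mp h) (not_le.mpr (hpdf_pos m₂ x))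
    · exact ENNReal.ofReal_ne_top
  -- the integral
  have h_int : ∫⁻ z, (μ₁.rnDeriv μ₂ z) ^ α ∂μ₂ = ENNReal.ofReal (rexp K) := by
    have hmeas : Measurable fun z ↦ (μ₁.rnDeriv μ₂ z) ^ α :=
      (Measure.measurable_rnDeriv _ _).pow_const _
    have hwd : ∀ g : ℝ → ℝ≥0∞, Measurable g →
        ∫⁻ z, g z ∂μ₂ = ∫⁻ z, gaussianPDF m₂ v z * g z ∂volume := by
      intro g hg
      rw [show μ₂ = volume.withDensity (gaussianPDF m₂ v) from gaussianReal_of_var_ne_zero _ hv,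
        lintegral_withDensity_eq_lintegral_mul _ (measurable_gaussianPDF m₂ v) hg]
      rfl
    rw [hwd _ hmeas]
    have h_eq : (fun x ↦ gaussianPDF m₂ v x * (μ₁.rnDeriv μ₂ x) ^ α) =ᵐ[volume]
        fun x ↦ ENNReal.ofReal (rexp K) * gaussianPDF (α * m₁ + (1 - α) * m₂) v x := by
      filter_upwards [h_rn] with x hx
      calc gaussianPDF m₂ v x * (μ₁.rnDeriv μ₂ x) ^ α
          = ENNReal.ofReal
            ((gaussianPDFReal m₁ v x / gaussianPDFReal m₂ v x) ^ α * gaussianPDFReal m₂ v x) := by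
            rw [hx]
            simp only [gaussianPDF]
            rw [← ENNReal.ofReal_div_of_pos (hpdf_pos m₂ x),
              ENNReal.ofReal_rpow_of_pos (div_pos (hpdf_pos m₁ x) (hpdf_pos m₂ x)),
              ← ENNReal.ofReal_mul (gaussianPDFReal_nonneg _ _ _),
              mul_comm (gaussianPDFReal m₂ v x)]
        _ = ENNReal.ofReal (rexp K) * gaussianPDF (α * m₁ + (1 - α) * m₂) v x := by
            rw [real_aux hσ v hvr x, ENNReal.ofReal_mul (exp_pos _).le]
            rfl
    rw [lintegral_congr_ae h_eq, lintegral_const_mul _ (measurable_gaussianPDF _ v),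
      lintegral_gaussianPDF_eq_one _ hv, mul_one]
  rw [h_int, ENNReal.log_ofReal_of_pos (exp_pos _), Real.log_exp, ← EReal.coe_mul]
  congr 1
  have hα1 : α - 1 ≠ 0 := by linarith
  rw [hK]
  field_simp
end

section
/- Rényi-differential-privacy guarantee of the multivariate Gaussian mechanism (the bound used for DP-PCA in the paper): let d be a positive natural number, σ > 0, α > 1, and let m, m′ ∈ ℝ^d with ∑_{i<d} (mᵢ − m′ᵢ)² ≤ 1 (i.e., ℓ₂-sensitivity at most 1). Let μ = ⊗_{i<d} N(mᵢ, σ²) and ν = ⊗_{i<d} N(m′ᵢ, σ²) be the product Gaussian measures on ℝ^d obtained by adding i.i.d. N(0, σ²) noise to each coordinate. Then D_α(μ ‖ ν) = α · ∑_{i<d} (mᵢ − m′ᵢ)² / (2σ²) ≤ α/(2σ²). -/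
open MeasureTheory Classical

open ProbabilityTheory

open scoped ENNReal NNReal Real

/-- Fubini for `lintegral` of a product of single-coordinate functions over a finite product
measure. -/
lemma lintegral_pi_prod {n : ℕ} (μ : Fin n → Measure ℝ) [∀ i, SigmaFinite (μ i)]
    (f : Fin n → ℝ → ℝ≥0∞) (hf : ∀ i, Measurable (f i)) :
    ∫⁻ x : Fin n → ℝ, ∏ i, f i (x i) ∂Measure.pi μ = ∏ i, ∫⁻ y, f i y ∂μ i := by
  induction n with
  | zero => simp [lintegral_const, Measure.pi_univ]
  | succ n ih =>
    have hmp := (measurePreserving_piFinSuccAbove μ 0).symm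
    have hFmeas : Measurable fun x : Fin (n+1) → ℝ => ∏ i, f i (x i) :=
      Finset.measurable_prod _ fun i _ => (hf i).comp (measurable_pi_apply i)
    rw [← hmp.lintegral_comp hFmeas]
    simp_rw [MeasurableEquiv.piFinSuccAbove_symm_apply, Fin.insertNthEquiv,
      Fin.prod_univ_succ, Fin.insertNth_zero]
    simp only [Fin.zero_succAbove, cast_eq, Fin.cons_zero, Fin.cons_succ, Equiv.coe_fn_mk]
    rw [lintegral_prod_mul (f := fun y => f 0 y)
      (g := fun b : Fin n → ℝ => ∏ i, f i.succ (b i)) (hf 0).aemeasurable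
      (Finset.measurable_prod _ fun i _ =>
        (hf i.succ).comp (measurable_pi_apply i)).aemeasurable]
    rw [ih (fun i => μ i.succ) (fun i => f i.succ) (fun i => hf i.succ)]

/-- A product of Gaussian measures is the Lebesgue product measure with the product density. -/
lemma pi_gaussianReal_eq {d : ℕ} (m : Fin d → ℝ) {v : ℝ≥0} (hv : v ≠ 0) :
    Measure.pi (fun i => gaussianReal (m i) v)
      = (Measure.pi fun _ : Fin d => (volume : Measure ℝ)).withDensity
          (fun x => ∏ i, gaussianPDF (m i) v (x i)) := by
  refine Measure.pi_eq (μ := fun i => gaussianReal (m i) v) fun s hs => ?_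
  rw [withDensity_apply _ (MeasurableSet.univ_pi hs)]
  have : ∀ x : Fin d → ℝ, (Set.univ.pi s).indicator (fun x => ∏ i, gaussianPDF (m i) v (x i)) x
      = ∏ i, (s i).indicator (gaussianPDF (m i) v) (x i) := by
    intro x
    by_cases hx : x ∈ Set.univ.pi s
    · rw [Set.indicator_of_mem hx]
      refine Finset.prod_congr rfl fun i _ => ?_
      rw [Set.indicator_of_mem (hx i (Set.mem_univ i))]
    · rw [Set.indicator_of_notMem hx]
      have hex : ∃ i, x i ∉ s i := by simpa [Set.mem_pi] using hx
      obtain ⟨i, hi⟩ := hex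
      exact (Finset.prod_eq_zero (Finset.mem_univ i)
        (by rw [Set.indicator_of_notMem hi])).symm
  rw [← lintegral_indicator (MeasurableSet.univ_pi hs)]
  simp_rw [this]
  rw [lintegral_pi_prod _ _ (fun i => (measurable_gaussianPDF _ _).indicator (hs i))]
  refine Finset.prod_congr rfl fun i _ => ?_
  rw [lintegral_indicator (hs i), ← gaussianReal_apply _ hv]

/-- The key pointwise computation for the Rényi divergence of two Gaussians. -/
lemma gauss_ratio_real {v : ℝ≥0} (hv : 0 < (v : ℝ)) (a b α y : ℝ) :
    gaussianPDFReal b v y * ((gaussianPDFReal b v y)⁻¹ * gaussianPDFReal a v y) ^ α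
      = rexp (α * (α - 1) * (a - b) ^ 2 / (2 * v))
        * gaussianPDFReal (b + α * (a - b)) v y := by
  have hc : (0:ℝ) < (√(2 * Real.pi * v))⁻¹ := by positivity
  simp only [gaussianPDFReal]
  set c : ℝ := (√(2 * Real.pi * v))⁻¹ with hcdef
  have h1 : (c * rexp (-(y - b) ^ 2 / (2 * v)))⁻¹ * (c * rexp (-(y - a) ^ 2 / (2 * v)))
      = rexp (-(y - a) ^ 2 / (2 * v) - -(y - b) ^ 2 / (2 * v)) := by
    rw [mul_inv, Real.exp_sub]
    field_simp
  rw [h1, ← Real.exp_mul, mul_assoc, ← Real.exp_add]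
  rw [show rexp (α * (α - 1) * (a - b) ^ 2 / (2 * ↑v))
        * (c * rexp (-(y - (b + α * (a - b))) ^ 2 / (2 * ↑v)))
      = c * rexp (α * (α - 1) * (a - b) ^ 2 / (2 * ↑v)
          + -(y - (b + α * (a - b))) ^ 2 / (2 * ↑v)) by
    rw [Real.exp_add]; ring]
  congr 1
  have h2v : (2 : ℝ) * v ≠ 0 := by positivity
  field_simp
  ring

theorem renyiDiv_gaussian_mechanism {d : ℕ} (hd : 0 < d) {σ α : ℝ}
    (hσ : 0 < σ) (hα : 1 < α) (m m' : Fin d → ℝ)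
    (hsens : ∑ i, (m i - m' i) ^ 2 ≤ 1) :
    renyiDiv α (Measure.pi fun i => gaussianReal (m i) ((σ ^ 2).toNNReal))
        (Measure.pi fun i => gaussianReal (m' i) ((σ ^ 2).toNNReal)) =
      ((α * (∑ i, (m i - m' i) ^ 2) / (2 * σ ^ 2) : ℝ) : EReal) ∧
    renyiDiv α (Measure.pi fun i => gaussianReal (m i) ((σ ^ 2).toNNReal))
        (Measure.pi fun i => gaussianReal (m' i) ((σ ^ 2).toNNReal)) ≤
      ((α / (2 * σ ^ 2) : ℝ) : EReal) := by
  set v : ℝ≥0 := (σ ^ 2).toNNReal with hvdef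
  have hvr : (v : ℝ) = σ ^ 2 := Real.coe_toNNReal _ (sq_nonneg σ)
  have hv0 : 0 < (v : ℝ) := by rw [hvr]; positivity
  have hv : v ≠ 0 := by
    intro h
    rw [h] at hv0
    simp at hv0
  set Λ : Measure (Fin d → ℝ) := Measure.pi fun _ => volume with hΛ
  set F : (Fin d → ℝ) → ℝ≥0∞ := fun x => ∏ i, gaussianPDF (m i) v (x i) with hFdef
  set G : (Fin d → ℝ) → ℝ≥0∞ := fun x => ∏ i, gaussianPDF (m' i) v (x i) with hGdef
  have hμ : Measure.pi (fun i => gaussianReal (m i) v) = Λ.withDensity F :=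
    pi_gaussianReal_eq m hv
  have hν : Measure.pi (fun i => gaussianReal (m' i) v) = Λ.withDensity G :=
    pi_gaussianReal_eq m' hv
  have hFmeas : Measurable F :=
    Finset.measurable_prod _ fun i _ => (measurable_gaussianPDF _ _).comp (measurable_pi_apply i)
  have hGmeas : Measurable G :=
    Finset.measurable_prod _ fun i _ => (measurable_gaussianPDF _ _).comp (measurable_pi_apply i)
  have hGpos : ∀ x, 0 < G x := fun x =>
    CanonicallyOrderedAdd.prod_pos.mpr fun i _ => gaussianPDF_pos _ hv _
  have hGtop : ∀ x, G x ≠ ⊤ := fun x =>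
    (ENNReal.prod_lt_top fun i _ => ENNReal.ofReal_lt_top).ne
  haveI : IsProbabilityMeasure (Λ.withDensity F) := hμ ▸ inferInstance
  haveI : IsProbabilityMeasure (Λ.withDensity G) := hν ▸ inferInstance
  have hΛν : Λ ≪ Λ.withDensity G :=
    withDensity_absolutelyContinuous' hGmeas.aemeasurable
      (Filter.Eventually.of_forall fun x => (hGpos x).ne')
  have hac : Measure.pi (fun i => gaussianReal (m i) v)
      ≪ Measure.pi (fun i => gaussianReal (m' i) v) := by
    rw [hμ, hν]
    exact (withDensity_absolutelyContinuous _ _).trans hΛν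
  -- The Radon-Nikodym derivative
  have hrn : (Measure.pi fun i => gaussianReal (m i) v).rnDeriv
        (Measure.pi fun i => gaussianReal (m' i) v)
      =ᵐ[Λ] fun x => (G x)⁻¹ * F x := by
    rw [hμ, hν]
    have h1 := Measure.rnDeriv_withDensity_right (Λ.withDensity F) Λ hGmeas.aemeasurable
      (Filter.Eventually.of_forall fun x => (hGpos x).ne')
      (Filter.Eventually.of_forall hGtop)
    have h2 := Measure.rnDeriv_withDensity Λ hFmeas
    filter_upwards [h1, h2] with x hx1 hx2
    rw [hx1, hx2]
  -- pointwise identity for the integrand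
  set φ : Fin d → ℝ → ℝ≥0∞ := fun i y =>
    ENNReal.ofReal (rexp (α * (α - 1) * (m i - m' i) ^ 2 / (2 * (v : ℝ)))
      * gaussianPDFReal (m' i + α * (m i - m' i)) v y) with hφdef
  have hφmeas : ∀ i, Measurable (φ i) := fun i =>
    ((measurable_gaussianPDFReal _ _).const_mul _).ennreal_ofReal
  have hpt : ∀ x, G x * ((G x)⁻¹ * F x) ^ α = ∏ i, φ i (x i) := by
    intro x
    have hPf : F x = ENNReal.ofReal (∏ i, gaussianPDFReal (m i) v (x i)) :=
      (ENNReal.ofReal_prod_of_nonneg fun i _ => gaussianPDFReal_nonneg _ _ _).symm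
    have hPg : G x = ENNReal.ofReal (∏ i, gaussianPDFReal (m' i) v (x i)) :=
      (ENNReal.ofReal_prod_of_nonneg fun i _ => gaussianPDFReal_nonneg _ _ _).symm
    set Pf : ℝ := ∏ i, gaussianPDFReal (m i) v (x i) with hPfdef
    set Pg : ℝ := ∏ i, gaussianPDFReal (m' i) v (x i) with hPgdef
    have hPfpos : 0 < Pf := Finset.prod_pos fun i _ => gaussianPDFReal_pos _ _ _ hv
    have hPgpos : 0 < Pg := Finset.prod_pos fun i _ => gaussianPDFReal_pos _ _ _ hv
    have step1 : G x * ((G x)⁻¹ * F x) ^ α = ENNReal.ofReal (Pg * (Pg⁻¹ * Pf) ^ α) := by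
      rw [hPf, hPg, ← ENNReal.ofReal_inv_of_pos hPgpos,
        ← ENNReal.ofReal_mul (inv_nonneg.mpr hPgpos.le),
        ENNReal.ofReal_rpow_of_pos (mul_pos (inv_pos.mpr hPgpos) hPfpos),
        ← ENNReal.ofReal_mul hPgpos.le]
    rw [step1]
    have step2 : Pg * (Pg⁻¹ * Pf) ^ α
        = ∏ i, (gaussianPDFReal (m' i) v (x i)
            * ((gaussianPDFReal (m' i) v (x i))⁻¹ * gaussianPDFReal (m i) v (x i)) ^ α) := by
      rw [hPfdef, hPgdef, ← Finset.prod_inv_distrib, ← Finset.prod_mul_distrib,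
        ← Real.finset_prod_rpow _ _ (fun i _ => mul_nonneg (inv_nonneg.mpr (gaussianPDFReal_nonneg _ _ _)) (gaussianPDFReal_nonneg _ _ _)) α, ← Finset.prod_mul_distrib]
    rw [step2]
    rw [show (∏ i, (gaussianPDFReal (m' i) v (x i)
          * ((gaussianPDFReal (m' i) v (x i))⁻¹ * gaussianPDFReal (m i) v (x i)) ^ α))
        = ∏ i, (rexp (α * (α - 1) * (m i - m' i) ^ 2 / (2 * (v : ℝ)))
            * gaussianPDFReal (m' i + α * (m i - m' i)) v (x i)) from
      Finset.prod_congr rfl fun i _ => gauss_ratio_real hv0 (m i) (m' i) α (x i)]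
    rw [ENNReal.ofReal_prod_of_nonneg fun i _ =>
      mul_nonneg (Real.exp_pos _).le (gaussianPDFReal_nonneg _ _ _)]
  -- compute the integral
  have hint : ∫⁻ z, ((Measure.pi fun i => gaussianReal (m i) v).rnDeriv
        (Measure.pi fun i => gaussianReal (m' i) v) z) ^ α
        ∂(Measure.pi fun i => gaussianReal (m' i) v)
      = ENNReal.ofReal (rexp (α * (α - 1) * (∑ i, (m i - m' i) ^ 2) / (2 * σ ^ 2))) := by
    have hcongr : (fun z => ((Measure.pi fun i => gaussianReal (m i) v).rnDeriv
          (Measure.pi fun i => gaussianReal (m' i) v) z) ^ α)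
        =ᵐ[Measure.pi fun i => gaussianReal (m' i) v]
          fun z => ((G z)⁻¹ * F z) ^ α := by
      have h := hν ▸ (withDensity_absolutelyContinuous Λ G)
      filter_upwards [h.ae_eq hrn] with z hz
      rw [hz]
    rw [lintegral_congr_ae hcongr]
    conv_lhs => rw [hν]
    rw [lintegral_withDensity_eq_lintegral_mul Λ hGmeas (g := fun x => ((G x)⁻¹ * F x) ^ α) ((hGmeas.inv.mul hFmeas).pow_const α)]
    have : (fun x => (G * fun x => ((G x)⁻¹ * F x) ^ α) x) = fun x => ∏ i, φ i (x i) := by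
      funext x
      exact hpt x
    rw [this, hΛ, lintegral_pi_prod _ _ hφmeas]
    have hone : ∀ i : Fin d, ∫⁻ y, φ i y ∂volume
        = ENNReal.ofReal (rexp (α * (α - 1) * (m i - m' i) ^ 2 / (2 * (v : ℝ)))) := by
      intro i
      simp_rw [hφdef, ENNReal.ofReal_mul (Real.exp_pos _).le]
      rw [lintegral_const_mul' _ _ ENNReal.ofReal_ne_top,
        lintegral_gaussianPDFReal_eq_one _ hv, mul_one]
    simp_rw [hone]
    rw [← ENNReal.ofReal_prod_of_nonneg fun i _ => (Real.exp_pos _).le, ← Real.exp_sum]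
    congr 2
    rw [← Finset.sum_div, ← Finset.mul_sum, hvr]
  have hα1 : α - 1 ≠ 0 := by
    intro h
    have : α = 1 := by linarith
    rw [this] at hα
    exact lt_irrefl _ hα
  have hS0 : (0:ℝ) ≤ ∑ i, (m i - m' i) ^ 2 :=
    Finset.sum_nonneg fun i _ => sq_nonneg _
  have heq : renyiDiv α (Measure.pi fun i => gaussianReal (m i) v)
      (Measure.pi fun i => gaussianReal (m' i) v)
      = ((α * (∑ i, (m i - m' i) ^ 2) / (2 * σ ^ 2) : ℝ) : EReal) := by
    rw [renyiDiv, if_pos hac, hint, ENNReal.log_ofReal_of_pos (Real.exp_pos _), Real.log_exp,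
      ← EReal.coe_mul]
    congr 1
    field_simp
  refine ⟨heq, ?_⟩
  rw [heq, EReal.coe_le_coe_iff]
  rw [div_le_div_iff₀ (by positivity) (by positivity)]
  have hα0 : (0:ℝ) ≤ α := by linarith
  nlinarith [mul_le_mul_of_nonneg_left hsens hα0, sq_nonneg σ]
end
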